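/- arXiv:1607.04092 — 3 statements merged into one kernel-verified Lean document; each statement's English description precedes it below -/
import Mathlib

section
/- Let 0 < H < 1/2 and θ > 0. Define, for g in the class K₁ = {g ∈ L²(ℝ) : ‖g‖₂ = 1, g' ∈ L²(ℝ)}, the functional H_θ(g) = θ ∫_ℝ |𝓕(g²)(ξ)|² |ξ|^{1-2H} dξ − (1/2)∫_ℝ |g'(x)|² dx. Then 𝓔_θ := sup{H_θ(g) : g ∈ K₁} is finite. -/
open MeasureTheory Real Set
open scoped FourierTransform ENNReal

private lemma rpow_two' (a : ℝ) : a ^ (2:ℝ) = a ^ 2 := by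
  rw [show (2:ℝ) = ((2:ℕ):ℝ) by norm_num, Real.rpow_natCast]

private lemma kernel_eq (w : ℝ → ℂ) (ξ : ℝ) :
    (∫ x : ℝ, Complex.exp (-(Complex.I * ξ * x)) * w x) = 𝓕 w (ξ / (2 * π)) := by
  rw [Real.fourier_real_eq_integral_exp_smul]
  congr 1
  ext x
  rw [smul_eq_mul]
  congr 1
  have hπ : (π : ℝ) ≠ 0 := Real.pi_ne_zero
  have h : -2 * π * x * (ξ / (2 * π)) = -(x * ξ) := by field_simp
  rw [h]
  push_cast
  ring_nf

private lemma exp_norm_one (ξ x : ℝ) : ‖Complex.exp (-(Complex.I * ξ * x))‖ = 1 := by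
  simp [Complex.norm_exp]

private lemma integrable_comp_abs' {f : ℝ → ℝ} (hf : IntegrableOn (fun x => f |x|) (Ioi 0)) :
    Integrable (fun x => f |x|) := by
  have int_Iic : IntegrableOn (fun x => f |x|) (Iic 0) := by
    rw [← Measure.map_neg_eq_self (volume : Measure ℝ)]
    have m : MeasurableEmbedding fun x : ℝ => -x := (Homeomorph.neg ℝ).measurableEmbedding
    rw [m.integrableOn_map_iff]
    simp_rw [Function.comp_def, abs_neg, neg_preimage, neg_Iic, neg_zero]
    exact Iff.mpr integrableOn_Ici_iff_integrableOn_Ioi hf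
  have := int_Iic.union hf
  rwa [Iic_union_Ioi, integrableOn_univ] at this

private lemma psi_main (H M R : ℝ) (hH : 0 < H) (hH' : H < 1/2) (hR : 0 < R) :
    Integrable (fun ξ : ℝ => if |ξ| ≤ R then |ξ| ^ (1-2*H) else M * |ξ| ^ (-1-2*H)) volume ∧
    (∫ ξ : ℝ, (if |ξ| ≤ R then |ξ| ^ (1-2*H) else M * |ξ| ^ (-1-2*H)))
      ≤ 2 * R ^ (2-2*H) + M * R ^ (-(2*H)) / H := by
  set F : ℝ → ℝ := fun t => if t ≤ R then t ^ (1-2*H) else M * t ^ (-1-2*H) with hF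
  have hfun : (fun ξ : ℝ => if |ξ| ≤ R then |ξ| ^ (1-2*H) else M * |ξ| ^ (-1-2*H))
      = fun ξ => F |ξ| := rfl
  have int1 : IntegrableOn F (Ioc 0 R) := by
    have h := (intervalIntegral.intervalIntegrable_rpow' (a := 0) (b := R)
      (by linarith : (-1:ℝ) < 1-2*H)).1
    apply IntegrableOn.congr_fun h ?_ measurableSet_Ioc
    intro t ht
    simp [hF, ht.2]
  have int2 : IntegrableOn F (Ioi R) := by
    have h := (integrableOn_Ioi_rpow_of_lt (by linarith : (-1-2*H) < -1) hR).const_mul M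
    apply IntegrableOn.congr_fun h ?_ measurableSet_Ioi
    intro t ht
    simp [hF, not_le.mpr (mem_Ioi.mp ht)]
  have intIoi : IntegrableOn F (Ioi 0) := by
    have := int1.union int2
    rwa [Ioc_union_Ioi_eq_Ioi hR.le] at this
  have intAbsIoi : IntegrableOn (fun x => F |x|) (Ioi 0) := by
    apply intIoi.congr_fun ?_ measurableSet_Ioi
    intro t ht
    show F t = F |t|
    rw [abs_of_pos (ht : (0:ℝ) < t)]
  have hInt : Integrable (fun x => F |x|) := integrable_comp_abs' intAbsIoi
  refine ⟨by rw [hfun]; exact hInt, ?_⟩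
  rw [hfun]
  rw [integral_comp_abs (f := F)]
  have hsplit : (∫ t in Ioi (0:ℝ), F t) = (∫ t in Ioc 0 R, F t) + ∫ t in Ioi R, F t := by
    rw [← setIntegral_union (Ioc_disjoint_Ioi le_rfl) measurableSet_Ioi int1 int2,
      Ioc_union_Ioi_eq_Ioi hR.le]
  have b1 : (∫ t in Ioc 0 R, F t) ≤ R ^ (2-2*H) := by
    have hconst : IntegrableOn (fun _ : ℝ => R ^ (1-2*H)) (Ioc 0 R) := by
      exact integrableOn_const measure_Ioc_lt_top.ne
    have hb : (∫ t in Ioc 0 R, F t) ≤ ∫ _t in Ioc 0 R, R ^ (1-2*H) := by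
      apply setIntegral_mono_on int1 hconst measurableSet_Ioc
      intro t ht
      simp only [hF, ht.2, if_true]
      exact Real.rpow_le_rpow ht.1.le ht.2 (by linarith)
    refine hb.trans_eq ?_
    rw [setIntegral_const]
    simp only [Real.volume_real_Ioc, smul_eq_mul, sub_zero, max_eq_left hR.le]
    rw [show (2-2*H:ℝ) = (1-2*H)+1 by ring, Real.rpow_add_one hR.ne']
    ring
  have b2 : (∫ t in Ioi R, F t) = M * (R ^ (-(2*H)) / (2*H)) := by
    have e : (∫ t in Ioi R, F t) = ∫ t in Ioi R, M * t ^ (-1-2*H) := by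
      apply setIntegral_congr_fun measurableSet_Ioi
      intro t ht
      simp [hF, not_le.mpr (mem_Ioi.mp ht)]
    rw [e, integral_const_mul, integral_Ioi_rpow_of_lt (by linarith) hR,
      show (-1-2*H+1:ℝ) = -(2*H) by ring]
    rw [neg_div, div_neg, neg_neg]
  rw [hsplit, b2]
  have hH0 : (H:ℝ) ≠ 0 := hH.ne'
  calc 2 * ((∫ t in Ioc 0 R, F t) + M * (R ^ (-(2*H)) / (2*H)))
      ≤ 2 * (R ^ (2-2*H) + M * (R ^ (-(2*H)) / (2*H))) := by linarith
    _ = 2 * R ^ (2-2*H) + M * R ^ (-(2*H)) / H := by field_simp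

private lemma deriv_bound (g g' : ℝ → ℝ) (hg2 : Integrable (fun x => g x * g x) volume)
    (hgg' : Integrable (fun x => g x * g' x) volume)
    (hd : ∀ x, HasDerivAt g (g' x) x) (ξ : ℝ) :
    |ξ| * ‖∫ x : ℝ, Complex.exp (-(Complex.I * ξ * x)) * ((g x:ℂ))^2‖
      ≤ 2 * ∫ x, |g x * g' x| := by
  set h : ℝ → ℂ := fun x => ((g x : ℂ))^2 with hh
  have hder : ∀ x, HasDerivAt h (((2 * (g x * g' x) : ℝ) : ℂ)) x := by
    intro x
    have h0 : HasDerivAt (fun y : ℝ => ((g y : ℂ))) (↑(g' x)) x := (hd x).ofReal_comp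
    have h1 : HasDerivAt (fun y => (g y:ℂ) * (g y:ℂ)) _ x := h0.mul h0
    convert h1 using 1
    · ext y; ring
    · push_cast; ring
  have hdiff : Differentiable ℝ h := fun x => (hder x).differentiableAt
  have hderiv : deriv h = fun x => ((2 * (g x * g' x) : ℝ) : ℂ) :=
    funext fun x => (hder x).deriv
  have hInt : Integrable h volume := by
    have := hg2.ofReal (𝕜 := ℂ)
    simpa [hh, sq, Complex.ofReal_mul] using this
  have hInt' : Integrable (deriv h) volume := by
    rw [hderiv]
    have := (hgg'.const_mul 2).ofReal (𝕜 := ℂ)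
    simpa [Complex.ofReal_mul] using this
  have key := Real.fourier_deriv hInt hdiff hInt'
  have e1 := kernel_eq h ξ
  have e2 := kernel_eq (deriv h) ξ
  have hπ : (π : ℝ) ≠ 0 := Real.pi_ne_zero
  have e3 : (2 * ↑π * Complex.I * ((ξ:ℝ) / (2 * π) : ℝ)) = Complex.I * ξ := by
    have h2π : (2 * (π:ℂ)) ≠ 0 := by simp [Real.pi_ne_zero]
    push_cast
    field_simp
  rw [key] at e2
  simp only [e3] at e2
  have lhs_eq : ‖(Complex.I * ξ) • 𝓕 h (ξ / (2*π))‖ = |ξ| * ‖𝓕 h (ξ / (2*π))‖ := by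
    rw [norm_smul]
    simp
  have bound : ‖∫ x : ℝ, Complex.exp (-(Complex.I * ξ * x)) * deriv h x‖
      ≤ 2 * ∫ x, |g x * g' x| := by
    calc ‖∫ x : ℝ, Complex.exp (-(Complex.I * ξ * x)) * deriv h x‖
        ≤ ∫ x : ℝ, ‖Complex.exp (-(Complex.I * ξ * x)) * deriv h x‖ :=
          norm_integral_le_integral_norm _
      _ = ∫ x : ℝ, 2 * |g x * g' x| := by
          congr 1
          ext x
          rw [norm_mul, exp_norm_one, one_mul, hderiv]
          simp [abs_mul]
      _ = 2 * ∫ x, |g x * g' x| := integral_const_mul 2 _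
  rw [e2] at bound
  rw [e1, ← lhs_eq]
  exact bound

private lemma sq_int_one (g : ℝ → ℝ) (hg : MemLp g 2 (volume : Measure ℝ))
    (hn : eLpNorm g 2 volume = 1) : ∫ x, (g x)^2 = 1 := by
  have h := hg.eLpNorm_eq_integral_rpow_norm two_ne_zero ENNReal.ofNat_ne_top
  rw [hn] at h
  simp only [ENNReal.toReal_ofNat] at h
  have hA : (0:ℝ) ≤ ∫ x, ‖g x‖ ^ (2:ℝ) :=
    integral_nonneg fun x => Real.rpow_nonneg (norm_nonneg _) _
  have h2 : ((∫ x, ‖g x‖ ^ (2:ℝ)) ^ ((2:ℝ)⁻¹)) = 1 := by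
    rw [eq_comm, ENNReal.ofReal_eq_one] at h
    exact h
  have h4 := congrArg (fun t : ℝ => t ^ (2:ℝ)) h2
  simp only [← Real.rpow_mul hA] at h4
  norm_num [Real.rpow_one, Real.one_rpow] at h4
  exact h4

private lemma cs_bound (g g' : ℝ → ℝ) (hg : MemLp g 2 (volume : Measure ℝ))
    (hg' : MemLp g' 2 volume) (hgs : ∫ x, (g x)^2 = 1) :
    (∫ x, |g x * g' x|) ^ 2 ≤ ∫ x, (g' x)^2 := by
  have hpq : Real.HolderConjugate 2 2 := Real.HolderConjugate.two_two
  have key := integral_mul_le_Lp_mul_Lq_of_nonneg (μ := volume) hpq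
    (f := fun x => ‖g x‖) (g := fun x => ‖g' x‖)
    (Filter.Eventually.of_forall fun x => norm_nonneg _)
    (Filter.Eventually.of_forall fun x => norm_nonneg _)
    (by simpa using hg.norm) (by simpa using hg'.norm)
  have e1 : (∫ x, ‖g x‖ * ‖g' x‖) = ∫ x, |g x * g' x| := by
    congr 1; ext x; rw [abs_mul]; simp [Real.norm_eq_abs]
  have e2 : (∫ x, ‖g x‖ ^ (2:ℝ)) = 1 := by
    rw [← hgs]; congr 1; ext x; rw [Real.norm_eq_abs, rpow_two', sq_abs]
  have e3 : (∫ x, ‖g' x‖ ^ (2:ℝ)) = ∫ x, (g' x)^2 := by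
    congr 1; ext x; rw [Real.norm_eq_abs, rpow_two', sq_abs]
  rw [e1, e2, e3] at key
  set N := ∫ x, (g' x)^2 with hN
  have hN0 : 0 ≤ N := integral_nonneg fun x => sq_nonneg _
  have hM0 : 0 ≤ ∫ x, |g x * g' x| := integral_nonneg fun x => abs_nonneg _
  have key2 : (∫ x, |g x * g' x|) ≤ N ^ ((2:ℝ)⁻¹) := by
    simpa [one_div] using key
  calc (∫ x, |g x * g' x|)^2 ≤ (N ^ ((2:ℝ)⁻¹))^2 := pow_le_pow_left₀ hM0 key2 2
    _ = N := by
        rw [← Real.rpow_natCast (N ^ ((2:ℝ)⁻¹)) 2, ← Real.rpow_mul hN0]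
        norm_num

/-- For `0 < H < 1/2` and `θ > 0`, the variational quantity
`H_θ(g) = θ ∫ |𝓕(g²)(ξ)|² |ξ|^(1-2H) dξ - (1/2) ∫ |g'|²` is bounded above over the
class `K₁ = {g ∈ L² : ‖g‖₂ = 1, g' ∈ L²}`, i.e. `𝓔_θ = sup H_θ < ∞`. -/
theorem stmt3 (H θ : ℝ) (hH : 0 < H) (hH' : H < 1/2) (hθ : 0 < θ) :
    ∃ C : ℝ, ∀ g g' : ℝ → ℝ, MemLp g 2 (volume : Measure ℝ) →
      eLpNorm g 2 volume = 1 →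
      (∀ x, HasDerivAt g (g' x) x) → MemLp g' 2 volume →
      θ * (∫ ξ : ℝ, ‖∫ x : ℝ, Complex.exp (-(Complex.I * ξ * x)) * ((g x : ℂ)) ^ 2‖ ^ 2
            * |ξ| ^ (1 - 2 * H))
        - (1/2) * (∫ x : ℝ, (g' x) ^ 2) ≤ C := by
  have hA : (0:ℝ) < 8*θ/H := by positivity
  set R : ℝ := (8*θ/H) ^ ((2*H)⁻¹) with hRdef
  have hR : 0 < R := Real.rpow_pos_of_pos hA _
  have hH0 : (H:ℝ) ≠ 0 := hH.ne'
  have hRpow : R ^ (2*H) = 8*θ/H := by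
    rw [hRdef, ← Real.rpow_mul hA.le]
    rw [inv_mul_cancel₀ (by positivity : (2*H:ℝ) ≠ 0), Real.rpow_one]
  have hRneg : R ^ (-(2*H)) = H/(8*θ) := by
    rw [Real.rpow_neg hR.le, hRpow, inv_div]
  refine ⟨θ * (2 * R ^ (2-2*H)), ?_⟩
  intro g g' hg hnorm hd hg'
  have h1 : (1 : ℝ≥0∞) / 1 = 1 / 2 + 1 / 2 := by
    simp only [one_div]; rw [ENNReal.inv_two_add_inv_two, inv_one]
  have hgg' : Integrable (fun x => g x * g' x) volume := by
    have := memLp_one_iff_integrable.mp (hg'.smul hg (p := 2) (q := 2) (r := 1))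
    exact this
  have hg2 : Integrable (fun x => g x * g x) volume := by
    have := memLp_one_iff_integrable.mp (hg.smul hg (p := 2) (q := 2) (r := 1))
    exact this
  set M : ℝ := ∫ x, |g x * g' x| with hM
  have hM0 : 0 ≤ M := integral_nonneg fun x => abs_nonneg _
  set N : ℝ := ∫ x, (g' x)^2 with hN
  have hN0 : 0 ≤ N := integral_nonneg fun x => sq_nonneg _
  have hgs : ∫ x, (g x)^2 = 1 := sq_int_one g hg hnorm
  set F : ℝ → ℂ := fun ξ => ∫ x : ℝ, Complex.exp (-(Complex.I * ξ * x)) * ((g x:ℂ))^2 with hFdef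
  have P1 : ∀ ξ : ℝ, ‖F ξ‖ ≤ 1 := by
    intro ξ
    rw [← hgs]
    refine (norm_integral_le_integral_norm _).trans_eq ?_
    congr 1
    ext x
    rw [norm_mul, exp_norm_one, one_mul]
    simp [sq_abs]
  have P2 : ∀ ξ : ℝ, |ξ| * ‖F ξ‖ ≤ 2 * M := fun ξ => deriv_bound g g' hg2 hgg' hd ξ
  have hMN : M^2 ≤ N := cs_bound g g' hg hg' hgs
  obtain ⟨hψint, hψval⟩ := psi_main H ((2*M)^2) R hH hH' hR
  have hmono : (∫ ξ : ℝ, ‖F ξ‖ ^ 2 * |ξ| ^ (1 - 2*H))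
      ≤ ∫ ξ : ℝ, (if |ξ| ≤ R then |ξ| ^ (1-2*H) else (2*M)^2 * |ξ| ^ (-1-2*H)) := by
    apply integral_mono_of_nonneg
    · exact Filter.Eventually.of_forall fun ξ => by positivity
    · exact hψint
    · apply Filter.Eventually.of_forall
      intro ξ
      by_cases hcase : |ξ| ≤ R
      · simp only [hcase, if_true]
        calc ‖F ξ‖ ^ 2 * |ξ| ^ (1-2*H) ≤ 1 * |ξ| ^ (1-2*H) := by
              apply mul_le_mul_of_nonneg_right ?_ (Real.rpow_nonneg (abs_nonneg _) _)
              exact pow_le_one₀ (norm_nonneg _) (P1 ξ)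
          _ = |ξ| ^ (1-2*H) := one_mul _
      · simp only [hcase, if_false]
        have hξR : R < |ξ| := not_le.mp hcase
        have hξ0 : (0:ℝ) < |ξ| := hR.trans hξR
        have hF2 : ‖F ξ‖ ≤ 2*M / |ξ| := by
          rw [le_div_iff₀ hξ0]
          rw [mul_comm]
          exact P2 ξ
        have hsq : ‖F ξ‖^2 ≤ (2*M)^2 / |ξ|^2 := by
          calc ‖F ξ‖^2 ≤ (2*M/|ξ|)^2 := pow_le_pow_left₀ (norm_nonneg _) hF2 2
            _ = (2*M)^2 / |ξ|^2 := div_pow _ _ 2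
        calc ‖F ξ‖ ^ 2 * |ξ| ^ (1-2*H) ≤ ((2*M)^2 / |ξ|^2) * |ξ| ^ (1-2*H) :=
              mul_le_mul_of_nonneg_right hsq (Real.rpow_nonneg (abs_nonneg _) _)
          _ = (2*M)^2 * |ξ| ^ (-1-2*H) := by
              have hne : ξ ≠ 0 := by
                intro hc
                rw [hc, abs_zero] at hξ0
                exact lt_irrefl _ hξ0
              rw [show (-1-2*H:ℝ) = (-2) + (1-2*H) by ring, Real.rpow_add hξ0,
                show ((-2:ℝ)) = ((-2:ℤ):ℝ) by norm_num, Real.rpow_intCast]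
              field_simp
  have hchain : (∫ ξ : ℝ, ‖F ξ‖ ^ 2 * |ξ| ^ (1 - 2*H))
      ≤ 2 * R ^ (2-2*H) + (2*M)^2 * R ^ (-(2*H)) / H := hmono.trans hψval
  have hmul : θ * (∫ ξ : ℝ, ‖F ξ‖ ^ 2 * |ξ| ^ (1 - 2*H))
      ≤ θ * (2 * R ^ (2-2*H) + (2*M)^2 * R ^ (-(2*H)) / H) :=
    mul_le_mul_of_nonneg_left hchain hθ.le
  have hkey : θ * (2 * R ^ (2-2*H) + (2*M)^2 * R ^ (-(2*H)) / H)
      = θ * (2 * R ^ (2-2*H)) + M^2 / 2 := by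
    rw [hRneg]
    field_simp
    ring
  rw [hkey] at hmul
  have : θ * (∫ ξ : ℝ, ‖F ξ‖ ^ 2 * |ξ| ^ (1 - 2*H)) - (1/2) * N
      ≤ θ * (2 * R ^ (2-2*H)) := by linarith
  exact this
end

section
/- For any α ∈ (0,1), sup_{β ≥ 1} ∫_ℝ |ξ|^α |∫_{−β}^{β} e^{i x ξ − x²/2} dx|² dξ < ∞. -/
open MeasureTheory Real Set

noncomputable section

private lemma gauss_deriv (x : ℝ) :
    HasDerivAt (fun y : ℝ => Real.exp (-y ^ 2 / 2)) (Real.exp (-x ^ 2 / 2) * (-x)) x := by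
  have h1 : HasDerivAt (fun y : ℝ => -y ^ 2 / 2) (-x) x := by
    have := ((hasDerivAt_pow 2 x).neg).div_const 2
    refine this.congr_deriv ?_
    push_cast
    ring
  exact h1.exp

private lemma abs_gauss_integral (β : ℝ) (hβ : 0 ≤ β) :
    ∫ x in (-β)..β, |x| * Real.exp (-x ^ 2 / 2) ≤ 2 := by
  have hcont : Continuous fun x : ℝ => |x| * Real.exp (-x ^ 2 / 2) := by
    exact continuous_abs.mul (Real.continuous_exp.comp ((continuous_pow 2).neg.div_const 2))
  have h1 : IntervalIntegrable (fun x : ℝ => |x| * Real.exp (-x ^ 2 / 2)) volume (-β) 0 :=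
    hcont.intervalIntegrable _ _
  have h2 : IntervalIntegrable (fun x : ℝ => |x| * Real.exp (-x ^ 2 / 2)) volume 0 β :=
    hcont.intervalIntegrable _ _
  rw [← intervalIntegral.integral_add_adjacent_intervals h1 h2]
  have e1 : ∫ x in (-β)..(0:ℝ), |x| * Real.exp (-x ^ 2 / 2)
      = ∫ x in (-β)..(0:ℝ), Real.exp (-x ^ 2 / 2) * (-x) := by
    apply intervalIntegral.integral_congr
    intro x hx
    rw [Set.uIcc_of_le (by linarith : -β ≤ 0)] at hx
    simp only
    rw [abs_of_nonpos hx.2]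
    ring
  have e2 : ∫ x in (0:ℝ)..β, |x| * Real.exp (-x ^ 2 / 2)
      = ∫ x in (0:ℝ)..β, -(Real.exp (-x ^ 2 / 2) * (-x)) := by
    apply intervalIntegral.integral_congr
    intro x hx
    rw [Set.uIcc_of_le hβ] at hx
    simp only
    rw [abs_of_nonneg hx.1]
    ring
  rw [e1, e2]
  have hc : Continuous fun x : ℝ => Real.exp (-x ^ 2 / 2) * (-x) := by fun_prop
  have key : ∀ a b : ℝ, ∫ x in a..b, Real.exp (-x ^ 2 / 2) * (-x)
      = Real.exp (-b ^ 2 / 2) - Real.exp (-a ^ 2 / 2) := fun a b =>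
    intervalIntegral.integral_eq_sub_of_hasDerivAt (fun x _ => gauss_deriv x)
      (hc.intervalIntegrable _ _)
  rw [intervalIntegral.integral_neg, key, key]
  have := Real.exp_pos (-β ^ 2 / 2)
  have h0 : Real.exp (-(0:ℝ) ^ 2 / 2) = 1 := by norm_num
  rw [h0]
  have hsq : Real.exp (-(-β) ^ 2 / 2) = Real.exp (-β ^ 2 / 2) := by ring_nf
  linarith

private lemma ibp_bound (β ξ : ℝ) (hβ : 0 ≤ β) (hξ : ξ ≠ 0) :
    ‖∫ x in Set.Icc (-β) β, Complex.exp (Complex.I * x * ξ - x ^ 2 / 2)‖ ≤ 4 / |ξ| := by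
  have hββ : -β ≤ β := by linarith
  have hξpos : (0:ℝ) < |ξ| := abs_pos.mpr hξ
  have hIξ : (Complex.I * (ξ:ℂ)) ≠ 0 :=
    mul_ne_zero Complex.I_ne_zero (Complex.ofReal_ne_zero.mpr hξ)
  set u : ℝ → ℂ := fun x => Complex.exp (-(x:ℂ) ^ 2 / 2) with hu_def
  set u' : ℝ → ℂ := fun x => Complex.exp (-(x:ℂ) ^ 2 / 2) * (-(x:ℂ)) with hu'_def
  set v : ℝ → ℂ := fun x => Complex.exp (Complex.I * x * ξ) / (Complex.I * ξ) with hv_def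
  set v' : ℝ → ℂ := fun x => Complex.exp (Complex.I * x * ξ) with hv'_def
  have hu : ∀ x ∈ Set.uIcc (-β) β, HasDerivAt u (u' x) x := by
    intro x _
    have h1 : HasDerivAt (fun z : ℂ => -z ^ 2 / 2) (-(x:ℂ)) (x:ℂ) := by
      have := ((hasDerivAt_pow 2 (x:ℂ)).neg).div_const 2
      refine this.congr_deriv ?_
      push_cast
      ring
    exact h1.cexp.comp_ofReal
  have hv : ∀ x ∈ Set.uIcc (-β) β, HasDerivAt v (v' x) x := by
    intro x _
    have hlin : HasDerivAt (fun z : ℂ => Complex.I * z * ξ) (Complex.I * ξ) (x:ℂ) := by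
      simpa using ((hasDerivAt_id (x:ℂ)).const_mul Complex.I).mul_const (ξ:ℂ)
    have h2 := (hlin.cexp.div_const (Complex.I * ξ)).comp_ofReal
    simpa [hv_def, hv'_def, mul_div_cancel_right₀ _ hIξ] using h2
  have hu'int : IntervalIntegrable u' volume (-β) β := by
    apply Continuous.intervalIntegrable
    fun_prop
  have hv'int : IntervalIntegrable v' volume (-β) β := by
    apply Continuous.intervalIntegrable
    fun_prop
  have key := intervalIntegral.integral_mul_deriv_eq_deriv_mul hu hv hu'int hv'int
  have hset : (∫ x in Set.Icc (-β) β, Complex.exp (Complex.I * x * ξ - x ^ 2 / 2))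
      = ∫ x in (-β)..β, u x * v' x := by
    rw [MeasureTheory.integral_Icc_eq_integral_Ioc, ← intervalIntegral.integral_of_le hββ]
    apply intervalIntegral.integral_congr
    intro x _
    simp only [hu_def, hv'_def]
    rw [← Complex.exp_add]
    congr 1
    ring
  have hnu : ∀ x : ℝ, ‖u x‖ = Real.exp (-x ^ 2 / 2) := by
    intro x
    rw [hu_def]
    simp only [Complex.norm_exp]
    congr 1
    have : (-(x:ℂ) ^ 2 / 2) = ((-x ^ 2 / 2 : ℝ) : ℂ) := by push_cast; ring
    rw [this, Complex.ofReal_re]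
  have hnv' : ∀ x : ℝ, ‖v' x‖ = 1 := by
    intro x
    rw [hv'_def]
    simp only [Complex.norm_exp]
    have : (Complex.I * x * ξ).re = 0 := by simp
    rw [this, Real.exp_zero]
  have hnIξ : ‖(Complex.I * (ξ:ℂ))‖ = |ξ| := by
    simp [norm_mul]
  have hnv : ∀ x : ℝ, ‖v x‖ = 1 / |ξ| := by
    intro x
    rw [hv_def]
    simp only [norm_div, hnIξ, show ‖Complex.exp (Complex.I * x * ξ)‖ = 1 from hnv' x]
  have hexp_le : ∀ x : ℝ, Real.exp (-x ^ 2 / 2) ≤ 1 := by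
    intro x
    rw [Real.exp_le_one_iff]
    nlinarith [sq_nonneg x]
  have hb1 : ‖u β * v β‖ ≤ 1 / |ξ| := by
    rw [norm_mul, hnu, hnv]
    calc Real.exp (-β ^ 2 / 2) * (1 / |ξ|) ≤ 1 * (1 / |ξ|) := by
          gcongr
          exact hexp_le β
      _ = 1 / |ξ| := one_mul _
  have hb2 : ‖u (-β) * v (-β)‖ ≤ 1 / |ξ| := by
    rw [norm_mul, hnu, hnv]
    calc Real.exp (-(-β) ^ 2 / 2) * (1 / |ξ|) ≤ 1 * (1 / |ξ|) := by
          gcongr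
          exact hexp_le (-β)
      _ = 1 / |ξ| := one_mul _
  have hb3 : ‖∫ x in (-β)..β, u' x * v x‖ ≤ 2 / |ξ| := by
    refine (intervalIntegral.norm_integral_le_integral_norm hββ).trans ?_
    have heq : ∀ x : ℝ, ‖u' x * v x‖ = (|x| * Real.exp (-x ^ 2 / 2)) / |ξ| := by
      intro x
      rw [norm_mul, hnv, hu'_def]
      simp only [norm_mul, norm_neg, Complex.norm_real, Real.norm_eq_abs]
      have : ‖Complex.exp (-(x:ℂ) ^ 2 / 2)‖ = Real.exp (-x ^ 2 / 2) := hnu x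
      rw [this]
      ring
    calc ∫ x in (-β)..β, ‖u' x * v x‖
        = ∫ x in (-β)..β, (|x| * Real.exp (-x ^ 2 / 2)) / |ξ| := by
          apply intervalIntegral.integral_congr
          intro x _
          exact heq x
      _ = (∫ x in (-β)..β, |x| * Real.exp (-x ^ 2 / 2)) / |ξ| := by
          rw [intervalIntegral.integral_div]
      _ ≤ 2 / |ξ| := by
          gcongr
          exact abs_gauss_integral β hβ
  rw [hset, key]
  calc ‖u β * v β - u (-β) * v (-β) - ∫ x in (-β)..β, u' x * v x‖
      ≤ ‖u β * v β - u (-β) * v (-β)‖ + ‖∫ x in (-β)..β, u' x * v x‖ := norm_sub_le _ _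
    _ ≤ (‖u β * v β‖ + ‖u (-β) * v (-β)‖) + ‖∫ x in (-β)..β, u' x * v x‖ := by
        gcongr
        exact norm_sub_le _ _
    _ ≤ (1 / |ξ| + 1 / |ξ|) + 2 / |ξ| := by gcongr
    _ = 4 / |ξ| := by ring

private lemma gauss_integrable : Integrable (fun x : ℝ => Real.exp (-x ^ 2 / 2)) := by
  have h := integrable_exp_neg_mul_sq (by norm_num : (0:ℝ) < 1/2)
  exact h.congr (Filter.Eventually.of_forall (fun x => by ring_nf))

private lemma triv_bound (β ξ : ℝ) :
    ‖∫ x in Set.Icc (-β) β, Complex.exp (Complex.I * x * ξ - x ^ 2 / 2)‖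
      ≤ Real.sqrt (2 * π) := by
  have hnorm : ∀ x : ℝ, ‖Complex.exp (Complex.I * x * ξ - x ^ 2 / 2)‖
      = Real.exp (-x ^ 2 / 2) := by
    intro x
    rw [Complex.norm_exp]
    congr 1
    simp [Complex.div_re, ← Complex.ofReal_pow, neg_div]
  calc ‖∫ x in Set.Icc (-β) β, Complex.exp (Complex.I * x * ξ - x ^ 2 / 2)‖
      ≤ ∫ x in Set.Icc (-β) β, ‖Complex.exp (Complex.I * x * ξ - x ^ 2 / 2)‖ :=
        norm_integral_le_integral_norm _
    _ = ∫ x in Set.Icc (-β) β, Real.exp (-x ^ 2 / 2) := by simp only [hnorm]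
    _ ≤ ∫ x : ℝ, Real.exp (-x ^ 2 / 2) :=
        setIntegral_le_integral gauss_integrable
          (Filter.Eventually.of_forall (fun x => (Real.exp_pos _).le))
    _ = Real.sqrt (2 * π) := by
        have h1 : (fun x : ℝ => Real.exp (-x ^ 2 / 2))
            = fun x : ℝ => Real.exp (-(1/2) * x ^ 2) := funext fun x => by ring_nf
        rw [h1, integral_gaussian]
        norm_num [mul_comm]

/-- For `α ∈ (0,1)`, `sup_{β ≥ 1} ∫ |ξ|^α |∫_{-β}^β e^{ixξ - x²/2} dx|² dξ < ∞`. -/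
theorem stmt14 (α : ℝ) (hα : 0 < α) (hα' : α < 1) :
    ∃ C : ℝ, ∀ β : ℝ, 1 ≤ β →
      (∫ ξ : ℝ, |ξ| ^ α *
        ‖∫ x in Set.Icc (-β) β,
            Complex.exp (Complex.I * (x : ℂ) * (ξ : ℂ) - (x : ℂ) ^ 2 / 2)‖ ^ 2) ≤ C := by
  set g : ℝ → ℝ := fun ξ => (Set.Icc (-1:ℝ) 1).indicator (fun ξ => 2 * π * |ξ| ^ α) ξ
      + ((Set.Icc (-1:ℝ) 1)ᶜ).indicator (fun ξ => 16 * |ξ| ^ (α - 2)) ξ with hg_def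
  have hcont1 : Continuous fun ξ : ℝ => 2 * π * |ξ| ^ α :=
    continuous_const.mul (continuous_abs.rpow_const fun x => Or.inr hα.le)
  have hint1 : Integrable ((Set.Icc (-1:ℝ) 1).indicator fun ξ : ℝ => 2 * π * |ξ| ^ α) :=
    (integrable_indicator_iff measurableSet_Icc).mpr (hcont1.integrableOn_Icc)
  have hIoi : IntegrableOn (fun ξ : ℝ => 16 * |ξ| ^ (α - 2)) (Set.Ioi (1:ℝ)) := by
    have base : IntegrableOn (fun ξ : ℝ => ξ ^ (α - 2)) (Set.Ioi (1:ℝ)) :=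
      (integrableOn_Ioi_rpow_iff one_pos).mpr (by linarith)
    exact MeasureTheory.IntegrableOn.congr_fun (base.const_mul 16)
      (fun x hx => by rw [abs_of_pos (lt_trans one_pos hx)]) measurableSet_Ioi
  have hIio : IntegrableOn (fun ξ : ℝ => 16 * |ξ| ^ (α - 2)) (Set.Iio (-1:ℝ)) := by
    have hpre : Set.Iio (-1:ℝ) = Neg.neg ⁻¹' Set.Ioi (1:ℝ) := by
      ext x
      simp only [Set.mem_Iio, Set.mem_preimage, Set.mem_Ioi]
      constructor <;> intro h <;> linarith
    have h2 := ((Measure.measurePreserving_neg (volume : Measure ℝ)).integrableOn_comp_preimage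
        (Homeomorph.neg ℝ).measurableEmbedding
        (f := fun ξ : ℝ => 16 * |ξ| ^ (α - 2)) (s := Set.Ioi (1:ℝ))).mpr hIoi
    rw [hpre]
    exact h2.congr_fun (fun x _ => by simp [Function.comp, abs_neg])
      (measurableSet_Ioi.preimage measurable_neg)
  have hint2 : Integrable (((Set.Icc (-1:ℝ) 1)ᶜ).indicator fun ξ : ℝ => 16 * |ξ| ^ (α - 2)) := by
    rw [integrable_indicator_iff measurableSet_Icc.compl]
    have hsub : (Set.Icc (-1:ℝ) 1)ᶜ ⊆ Set.Iio (-1) ∪ Set.Ioi 1 := by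
      intro x hx
      simp only [Set.mem_compl_iff, Set.mem_Icc, not_and_or, not_le] at hx
      simpa [Set.mem_union] using hx
    exact (hIio.union hIoi).mono_set hsub
  have hg_int : Integrable g := hint1.add hint2
  refine ⟨∫ ξ : ℝ, g ξ, fun β hβ => ?_⟩
  apply integral_mono_of_nonneg
  · exact Filter.Eventually.of_forall fun ξ =>
      mul_nonneg (Real.rpow_nonneg (abs_nonneg _) _) (pow_nonneg (norm_nonneg _) 2)
  · exact hg_int
  · refine Filter.Eventually.of_forall fun ξ => ?_
    by_cases hmem : ξ ∈ Set.Icc (-1:ℝ) 1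
    · have hb := triv_bound β ξ
      have h2π : Real.sqrt (2 * π) ^ 2 = 2 * π := Real.sq_sqrt (by positivity)
      have hF : ‖∫ x in Set.Icc (-β) β,
          Complex.exp (Complex.I * x * ξ - x ^ 2 / 2)‖ ^ 2 ≤ 2 * π := by
        rw [← h2π]
        exact pow_le_pow_left₀ (norm_nonneg _) hb 2
      calc |ξ| ^ α * ‖∫ x in Set.Icc (-β) β,
              Complex.exp (Complex.I * x * ξ - x ^ 2 / 2)‖ ^ 2
          ≤ |ξ| ^ α * (2 * π) := by
            gcongr
        _ = 2 * π * |ξ| ^ α := by ring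
        _ ≤ g ξ := by
            rw [hg_def]
            simp only
            rw [Set.indicator_of_mem hmem, Set.indicator_of_notMem (by simpa using hmem)]
            simp
    · have h1 : 1 < |ξ| := by
        simp only [Set.mem_Icc, not_and_or, not_le] at hmem
        rcases hmem with h | h
        · rw [abs_of_neg (by linarith)]; linarith
        · rw [abs_of_pos (by linarith)]; linarith
      have hξ0 : ξ ≠ 0 := by
        intro h
        rw [h] at h1
        norm_num at h1
      have hpos : (0:ℝ) < |ξ| := by linarith
      have hb := ibp_bound β ξ (by linarith) hξ0
      have hF : ‖∫ x in Set.Icc (-β) β,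
          Complex.exp (Complex.I * x * ξ - x ^ 2 / 2)‖ ^ 2 ≤ (4 / |ξ|) ^ 2 :=
        pow_le_pow_left₀ (norm_nonneg _) hb 2
      have hkey : |ξ| ^ α * (4 / |ξ|) ^ 2 = 16 * |ξ| ^ (α - 2) := by
        rw [div_pow, Real.rpow_sub hpos, show ((2:ℝ)) = ((2:ℕ):ℝ) by norm_num,
          Real.rpow_natCast]
        have : |ξ| ^ (2:ℕ) ≠ 0 := pow_ne_zero _ (ne_of_gt hpos)
        field_simp
        ring
      calc |ξ| ^ α * ‖∫ x in Set.Icc (-β) β,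
              Complex.exp (Complex.I * x * ξ - x ^ 2 / 2)‖ ^ 2
          ≤ |ξ| ^ α * (4 / |ξ|) ^ 2 := by
            gcongr
        _ = 16 * |ξ| ^ (α - 2) := hkey
        _ ≤ g ξ := by
            rw [hg_def]
            simp only
            rw [Set.indicator_of_notMem hmem, Set.indicator_of_mem (by simpa using hmem)]
            simp

end
end

section
/- Let 0 < s < t, η ≠ 0, β ≥ 1, and define ρ^{(β)}(s,t;η) = (2π(t−s))^{-1/2} ∫_{−β√t}^{β√t} e^{−ixη − x²/(2(t−s))} dx. Then there is a constant C (independent of s, t, η, β) such that for every θ ∈ [0,1], |ρ^{(β)}(s,t;η) − e^{−(t−s)η²/2}| ≤ C |η|^{−θ} (t−s)^{−θ/2} e^{−β²θ/2}. -/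
open MeasureTheory

open Set Filter Complex Real


lemma aux_norm (σ η x : ℝ) :
    Complex.exp (-(Complex.I * x * η) - (x:ℂ)^2 / (2*σ)) =
      Complex.exp (-(Complex.I * η) * x) * ((Real.exp (-(x^2/(2*σ))) : ℝ) : ℂ) := by
  rw [Complex.ofReal_exp, ← Complex.exp_add]
  congr 1
  push_cast
  ring

lemma aux_norm' (σ η x : ℝ) :
    ‖Complex.exp (-(Complex.I * x * η) - (x:ℂ)^2 / (2*σ))‖ = Real.exp (-(x^2/(2*σ))) := by
  rw [aux_norm, norm_mul, Complex.norm_exp]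
  have : (-(Complex.I * η) * x).re = 0 := by simp
  rw [this, Real.exp_zero, one_mul, Complex.norm_real, Real.norm_eq_abs,
    _root_.abs_of_nonneg (Real.exp_pos _).le]

lemma aux_integrable (σ η : ℝ) (hσ : 0 < σ) :
    Integrable (fun x : ℝ => Complex.exp (-(Complex.I * x * η) - (x:ℂ)^2 / (2*σ))) := by
  have h : (0:ℝ) < ((((2*σ)⁻¹ : ℝ) : ℂ)).re := by
    simp [Complex.ofReal_re]; positivity
  have := integrable_cexp_quadratic h (-(Complex.I * η)) 0
  apply this.congr
  filter_upwards with x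
  congr 1
  push_cast
  have h2σ : (2*(σ:ℂ)) ≠ 0 := by
    simp only [ne_eq, mul_eq_zero, OfNat.ofNat_ne_zero, false_or, Complex.ofReal_eq_zero]
    exact hσ.ne'
  field_simp
  ring


lemma aux_gauss_real (σ : ℝ) (hσ : 0 < σ) :
    ∫ x : ℝ, Real.exp (-(x^2/(2*σ))) = Real.sqrt (2*Real.pi*σ) := by
  have := integral_gaussian ((2*σ)⁻¹)
  rw [show Real.pi / (2*σ)⁻¹ = 2*Real.pi*σ by field_simp] at this
  rw [← this]
  congr 1
  funext x
  congr 1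
  field_simp

lemma aux_full (σ η : ℝ) (hσ : 0 < σ) :
    ∫ x : ℝ, Complex.exp (-(Complex.I * x * η) - (x:ℂ)^2 / (2*σ)) =
      ((Real.sqrt (2*Real.pi*σ) : ℝ) : ℂ) * ((Real.exp (-(σ*η^2/2)) : ℝ) : ℂ) := by
  have h : (0:ℝ) < ((((2*σ)⁻¹ : ℝ) : ℂ)).re := by
    simp [Complex.ofReal_re]; positivity
  have key := fourierIntegral_gaussian h (-(η:ℂ))
  have h2σ : (2*(σ:ℂ)) ≠ 0 := by
    simp only [ne_eq, mul_eq_zero, OfNat.ofNat_ne_zero, false_or, Complex.ofReal_eq_zero]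
    exact hσ.ne'
  have lhs_eq : ∀ x : ℝ, Complex.exp (Complex.I * (-(η:ℂ)) * x) *
      Complex.exp (-(((2*σ)⁻¹ : ℝ):ℂ) * (x:ℂ)^2) =
      Complex.exp (-(Complex.I * x * η) - (x:ℂ)^2 / (2*σ)) := by
    intro x
    rw [← Complex.exp_add]
    congr 1
    push_cast
    field_simp
    ring
  rw [show (∫ x : ℝ, Complex.exp (-(Complex.I * x * η) - (x:ℂ)^2 / (2*σ)))
      = ∫ x : ℝ, Complex.exp (Complex.I * (-(η:ℂ)) * x) *
        Complex.exp (-(((2*σ)⁻¹ : ℝ):ℂ) * (x:ℂ)^2) from by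
    congr 1; funext x; rw [lhs_eq]]
  rw [key]
  congr 1
  · rw [show ((Real.pi : ℂ) / (((2*σ)⁻¹ : ℝ):ℂ)) = (((2*Real.pi*σ : ℝ)):ℂ) by
      push_cast; field_simp]
    rw [Real.sqrt_eq_rpow, Complex.ofReal_cpow (by positivity)]
    norm_num
  · rw [Complex.ofReal_exp]
    congr 1
    push_cast
    field_simp
    ring

lemma aux_h_deriv (σ : ℝ) (hσ : 0 < σ) (x : ℝ) :
    HasDerivAt (fun y : ℝ => Real.exp (-(y^2/(2*σ)))) (-(x/σ) * Real.exp (-(x^2/(2*σ)))) x := by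
  have h1 : HasDerivAt (fun y : ℝ => -(y^2/(2*σ))) (-(x/σ)) x := by
    have := ((hasDerivAt_pow 2 x).div_const (2*σ)).neg
    convert this using 1
    · rfl
    · rfl
    · rfl
    · norm_num
      field_simp
  simpa [mul_comm] using h1.exp

lemma aux_h_tendsto (σ : ℝ) (hσ : 0 < σ) :
    Tendsto (fun y : ℝ => Real.exp (-(y^2/(2*σ)))) atTop (nhds 0) := by
  apply Real.tendsto_exp_atBot.comp
  apply tendsto_neg_atBot_iff.mpr
  exact (tendsto_pow_atTop (by norm_num)).atTop_div_const (by positivity)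

lemma aux_tail (σ η a : ℝ) (hσ : 0 < σ) (hη : η ≠ 0) (ha : 0 ≤ a) :
    ‖∫ x in Set.Ioi a, Complex.exp (-(Complex.I * x * η) - (x:ℂ)^2 / (2*σ))‖
      ≤ 2 * Real.exp (-(a^2/(2*σ))) / |η| := by
  set c : ℂ := -(Complex.I * η) with hc
  have hc0 : c ≠ 0 := by
    simp only [hc, ne_eq, neg_eq_zero, mul_eq_zero, Complex.I_ne_zero, false_or,
      Complex.ofReal_eq_zero]
    exact hη
  have hcnorm : ‖c‖ = |η| := by
    simp [hc]
  set h : ℝ → ℝ := fun x => Real.exp (-(x^2/(2*σ))) with hh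
  have hexpnorm : ∀ x : ℝ, ‖Complex.exp (c * x)‖ = 1 := by
    intro x
    rw [Complex.norm_exp]
    have : (c * x).re = 0 := by simp [hc]
    rw [this, Real.exp_zero]
  -- derivative of x ↦ cexp (c x)
  have hexp_deriv : ∀ x : ℝ, HasDerivAt (fun y : ℝ => Complex.exp (c*y))
      (c * Complex.exp (c*x)) x := by
    intro x
    have := (((hasDerivAt_id (x:ℂ)).const_mul c).cexp).comp_ofReal
    simpa [mul_comm] using this
  -- derivative of F
  have hF_deriv : ∀ x : ℝ, HasDerivAt (fun y : ℝ => Complex.exp (c*y) * ((h y : ℝ) : ℂ) / c)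
      (Complex.exp (c*x) * ((h x : ℝ) : ℂ)
        + Complex.exp (c*x)/c * ((-(x/σ) * h x : ℝ) : ℂ)) x := by
    intro x
    have h1 := ((hexp_deriv x).mul ((aux_h_deriv σ hσ x).ofReal_comp)).div_const c
    have hkey : ∀ A B D : ℂ, A * B + A / c * D = (c * A * B + A * D) / c := by
      intro A B D
      field_simp
    convert h1 using 1
    exacts [rfl, rfl, hkey _ _ _]
  -- tendsto of F
  have hFt : Tendsto (fun y : ℝ => Complex.exp (c*y) * ((h y : ℝ) : ℂ) / c) atTop (nhds 0) := by
    have hlim : Tendsto (fun y : ℝ => h y / |η|) atTop (nhds 0) := by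
      simpa using (aux_h_tendsto σ hσ).div_const |η|
    refine squeeze_zero_norm (fun y => le_of_eq ?_) hlim
    rw [norm_div, norm_mul, hexpnorm, one_mul, hcnorm, Complex.norm_real, Real.norm_eq_abs,
      _root_.abs_of_nonneg (Real.exp_pos _).le]
  -- integrability of the main integrand
  have hInt_g : IntegrableOn (fun x : ℝ => Complex.exp (c*x) * ((h x : ℝ) : ℂ)) (Set.Ioi a) := by
    have heq : (fun x : ℝ => Complex.exp (c*x) * ((h x : ℝ) : ℂ))
        = fun x : ℝ => Complex.exp (-(Complex.I * x * η) - (x:ℂ)^2 / (2*σ)) := by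
      funext x; rw [aux_norm]
    rw [heq]
    exact (aux_integrable σ η hσ).integrableOn
  -- derivative of -h and integrability of (x/σ) h x
  have hφ_deriv : ∀ x : ℝ, HasDerivAt (fun y : ℝ => -h y) ((x/σ) * h x) x := by
    intro x
    have := (aux_h_deriv σ hσ x).neg
    simp only [neg_mul, neg_neg] at this
    exact this
  have hφ_t : Tendsto (fun y : ℝ => -h y) atTop (nhds 0) := by
    simpa using (aux_h_tendsto σ hσ).neg
  have hd_nonneg : ∀ x ∈ Set.Ioi a, 0 ≤ (x/σ) * h x := by
    intro x hx
    have hx0 : 0 ≤ x := le_trans ha (le_of_lt hx)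
    have := (Real.exp_pos (-(x^2/(2*σ)))).le
    positivity
  have hInt_hd : IntegrableOn (fun x : ℝ => (x/σ) * h x) (Set.Ioi a) :=
    integrableOn_Ioi_deriv_of_nonneg' (fun x _ => hφ_deriv x) hd_nonneg hφ_t
  have hval : ∫ x in Set.Ioi a, (x/σ) * h x = h a := by
    have := integral_Ioi_of_hasDerivAt_of_nonneg' (fun x _ => hφ_deriv x) hd_nonneg hφ_t
    simpa using this
  -- integrability of f2
  have hInt_f2 : IntegrableOn
      (fun x : ℝ => Complex.exp (c*x)/c * ((-(x/σ) * h x : ℝ) : ℂ)) (Set.Ioi a) := by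
    have h1 : IntegrableOn (fun x : ℝ => ((-(x/σ) * h x : ℝ) : ℂ)) (Set.Ioi a) := by
      have := (hInt_hd.neg).ofReal (𝕜 := ℂ)
      apply this.congr
      filter_upwards with x
      simp only [Pi.neg_apply]
      push_cast
      ring_nf
      rfl
    apply h1.bdd_mul (c := 1/|η|)
    · exact ((Complex.continuous_exp.comp (continuous_const.mul
        Complex.continuous_ofReal)).div_const c).aestronglyMeasurable
    · refine Filter.Eventually.of_forall (fun x => ?_)
      rw [norm_div, hexpnorm, hcnorm]
  -- FTC on Ioi
  have hIBP : ∫ x in Set.Ioi a, (Complex.exp (c*x) * ((h x : ℝ) : ℂ)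
        + Complex.exp (c*x)/c * ((-(x/σ) * h x : ℝ) : ℂ))
      = 0 - Complex.exp (c*a) * ((h a : ℝ) : ℂ) / c :=
    integral_Ioi_of_hasDerivAt_of_tendsto' (fun x _ => hF_deriv x) (hInt_g.add hInt_f2) hFt
  have hsplit : ∫ x in Set.Ioi a, Complex.exp (c*x) * ((h x : ℝ) : ℂ)
      = (0 - Complex.exp (c*a) * ((h a : ℝ) : ℂ) / c)
        - ∫ x in Set.Ioi a, Complex.exp (c*x)/c * ((-(x/σ) * h x : ℝ) : ℂ) := by
    rw [← hIBP, integral_add hInt_g hInt_f2]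
    ring
  -- rewrite the goal integrand
  have hgoal : ∫ x in Set.Ioi a, Complex.exp (-(Complex.I * x * η) - (x:ℂ)^2 / (2*σ))
      = ∫ x in Set.Ioi a, Complex.exp (c*x) * ((h x : ℝ) : ℂ) := by
    congr 1; funext x; rw [aux_norm]
  rw [hgoal, hsplit]
  have hb1 : ‖0 - Complex.exp (c*a) * ((h a : ℝ) : ℂ) / c‖ = h a / |η| := by
    rw [zero_sub, norm_neg, norm_div, norm_mul, hexpnorm, one_mul, hcnorm, Complex.norm_real,
      Real.norm_eq_abs, _root_.abs_of_nonneg (Real.exp_pos _).le]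
  have hb2 : ‖∫ x in Set.Ioi a, Complex.exp (c*x)/c * ((-(x/σ) * h x : ℝ) : ℂ)‖
      ≤ h a / |η| := by
    have hbound : ∀ᵐ (x : ℝ) ∂(volume.restrict (Set.Ioi a)),
        ‖Complex.exp (c*(x:ℂ))/c * ((-(x/σ) * h x : ℝ) : ℂ)‖ ≤ (x/σ) * h x / |η| := by
      filter_upwards [ae_restrict_mem measurableSet_Ioi] with x hx
      have hx0 : 0 ≤ x := le_trans ha (le_of_lt hx)
      rw [norm_mul, norm_div, hexpnorm, hcnorm, Complex.norm_real, Real.norm_eq_abs]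
      rw [neg_mul, abs_neg, _root_.abs_of_nonneg (by positivity : 0 ≤ x/σ * h x)]
      rw [div_mul_eq_mul_div, one_mul]
    calc ‖∫ x in Set.Ioi a, Complex.exp (c*x)/c * ((-(x/σ) * h x : ℝ) : ℂ)‖
        ≤ ∫ x in Set.Ioi a, (x/σ) * h x / |η| :=
          norm_integral_le_of_norm_le (hInt_hd.div_const |η|) hbound
      _ = h a / |η| := by rw [integral_div, hval]
  calc ‖(0 - Complex.exp (c*a) * ((h a : ℝ) : ℂ) / c)
        - ∫ x in Set.Ioi a, Complex.exp (c*x)/c * ((-(x/σ) * h x : ℝ) : ℂ)‖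
      ≤ ‖0 - Complex.exp (c*a) * ((h a : ℝ) : ℂ) / c‖
        + ‖∫ x in Set.Ioi a, Complex.exp (c*x)/c * ((-(x/σ) * h x : ℝ) : ℂ)‖ := norm_sub_le _ _
    _ ≤ h a / |η| + h a / |η| := by rw [hb1]; exact add_le_add_right hb2 _
    _ = 2 * Real.exp (-(a^2/(2*σ))) / |η| := by rw [hh]; ring

lemma aux_tail_neg (σ η a : ℝ) (hσ : 0 < σ) (hη : η ≠ 0) (ha : 0 ≤ a) :
    ‖∫ x in Set.Iic (-a), Complex.exp (-(Complex.I * x * η) - (x:ℂ)^2 / (2*σ))‖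
      ≤ 2 * Real.exp (-(a^2/(2*σ))) / |η| := by
  rw [← integral_comp_neg_Ioi a (fun x : ℝ => Complex.exp (-(Complex.I * x * η) - (x:ℂ)^2 / (2*σ)))]
  have e : ∀ x : ℝ, Complex.exp (-(Complex.I * ((-x : ℝ) : ℂ) * η) - ((-x : ℝ):ℂ)^2 / (2*σ))
      = Complex.exp (-(Complex.I * x * ((-η : ℝ) : ℂ)) - (x:ℂ)^2 / (2*σ)) := by
    intro x
    congr 1
    push_cast
    ring
  simp_rw [e]
  have := aux_tail σ (-η) a hσ (neg_ne_zero.mpr hη) ha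
  rwa [abs_neg] at this

/-- Estimate for the Fourier transform of the truncated heat kernel: there is a
constant `C` such that for all `0 < s < t`, `η ≠ 0`, `β ≥ 1` and `θ ∈ [0,1]`,
`|ρ^{(β)}(s,t;η) - e^{-(t-s)η²/2}| ≤ C |η|^{-θ} (t-s)^{-θ/2} e^{-β²θ/2}`, where
`ρ^{(β)}(s,t;η) = (2π(t-s))^{-1/2} ∫_{-β√t}^{β√t} e^{-ixη - x²/(2(t-s))} dx`. -/
theorem stmt15 :
    ∃ C : ℝ, 0 < C ∧ ∀ (s t η β θ : ℝ), 0 < s → s < t → η ≠ 0 → 1 ≤ β →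
      θ ∈ Set.Icc (0 : ℝ) 1 →
      ‖(((Real.sqrt (2 * Real.pi * (t - s)))⁻¹ : ℝ) : ℂ) *
          (∫ x in Set.Icc (-(β * Real.sqrt t)) (β * Real.sqrt t),
            Complex.exp (-(Complex.I * (x : ℂ) * (η : ℂ)) - (x : ℂ) ^ 2 / (2 * (t - s))))
        - ((Real.exp (-((t - s) * η ^ 2 / 2)) : ℝ) : ℂ)‖
      ≤ C * |η| ^ (-θ) * (t - s) ^ (-θ / 2) * Real.exp (-β ^ 2 * θ / 2) := by
  refine ⟨4, by norm_num, ?_⟩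
  intro s t η β θ hs hst hη hβ hθ
  obtain ⟨hθ0, hθ1⟩ := hθ
  have hσ : 0 < t - s := by linarith
  set σ : ℝ := t - s with hσdef
  have ht : 0 < t := lt_trans hs hst
  set a : ℝ := β * Real.sqrt t with hadef
  have hsqrt_t : 0 < Real.sqrt t := Real.sqrt_pos.mpr ht
  have hβ0 : (0:ℝ) < β := lt_of_lt_of_le one_pos hβ
  have ha : 0 < a := by rw [hadef]; positivity
  have ha2 : a^2 = β^2 * t := by rw [hadef, mul_pow, Real.sq_sqrt ht.le]
  have hcast : ((t:ℂ) - (s:ℂ)) = ((σ : ℝ) : ℂ) := by rw [hσdef]; push_cast; ring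
  rw [hcast]
  have h2πσ : 0 < 2*Real.pi*σ := by positivity
  have hsq : 0 < Real.sqrt (2*Real.pi*σ) := Real.sqrt_pos.mpr h2πσ
  have hIg := aux_integrable σ η hσ
  set g : ℝ → ℂ := fun x : ℝ => Complex.exp (-(Complex.I * x * η) - (x:ℂ)^2 / (2*σ)) with hg
  set E : ℝ := ‖(((Real.sqrt (2 * Real.pi * σ))⁻¹ : ℝ) : ℂ) *
      (∫ x in Set.Icc (-a) a, g x) - ((Real.exp (-(σ * η ^ 2 / 2)) : ℝ) : ℂ)‖ with hE
  show E ≤ 4 * |η| ^ (-θ) * σ ^ (-θ / 2) * Real.exp (-β ^ 2 * θ / 2)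
  -- Bound 1 : E ≤ 2
  have hE2 : E ≤ 2 := by
    rw [hE]
    refine le_trans (norm_sub_le _ _) ?_
    have h1 : ‖(((Real.sqrt (2 * Real.pi * σ))⁻¹ : ℝ) : ℂ) *
        (∫ x in Set.Icc (-a) a, g x)‖ ≤ 1 := by
      rw [norm_mul, Complex.norm_real, Real.norm_eq_abs,
        _root_.abs_of_nonneg (by positivity : (0:ℝ) ≤ (Real.sqrt (2 * Real.pi * σ))⁻¹)]
      have h2 : ‖∫ x in Set.Icc (-a) a, g x‖ ≤ Real.sqrt (2 * Real.pi * σ) := by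
        refine le_trans (norm_integral_le_integral_norm _) ?_
        have h3 : ∫ x in Set.Icc (-a) a, ‖g x‖ ≤ ∫ x : ℝ, ‖g x‖ :=
          setIntegral_le_integral hIg.norm (Filter.Eventually.of_forall fun x => norm_nonneg _)
        refine le_trans h3 (le_of_eq ?_)
        rw [show (fun x : ℝ => ‖g x‖) = fun x : ℝ => Real.exp (-(x^2/(2*σ))) from
          funext fun x => aux_norm' σ η x]
        exact aux_gauss_real σ hσ
      calc (Real.sqrt (2 * Real.pi * σ))⁻¹ * ‖∫ x in Set.Icc (-a) a, g x‖
          ≤ (Real.sqrt (2 * Real.pi * σ))⁻¹ * Real.sqrt (2 * Real.pi * σ) := by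
            gcongr
        _ = 1 := inv_mul_cancel₀ hsq.ne'
    have h2 : ‖((Real.exp (-(σ * η ^ 2 / 2)) : ℝ) : ℂ)‖ ≤ 1 := by
      rw [Complex.norm_real, Real.norm_eq_abs, _root_.abs_of_nonneg (Real.exp_pos _).le]
      exact Real.exp_le_one_iff.mpr (by nlinarith [sq_nonneg η, hσ] : -(σ * η ^ 2 / 2) ≤ 0)
    linarith
  -- decomposition of the full integral
  have hIcc : ∫ x in Set.Icc (-a) a, g x = ∫ x in Set.Ioc (-a) a, g x :=
    integral_Icc_eq_integral_Ioc
  have hsplit : ∫ x : ℝ, g x = ((∫ x in Set.Iic (-a), g x) + ∫ x in Set.Ioc (-a) a, g x)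
      + ∫ x in Set.Ioi a, g x := by
    have h1 : Set.Iic (-a) ∪ Set.Ioc (-a) a = Set.Iic a := Set.Iic_union_Ioc_eq_Iic (by linarith)
    have h2 : Set.Iic a ∪ Set.Ioi a = Set.univ := Set.Iic_union_Ioi
    rw [← setIntegral_union (Set.Iic_disjoint_Ioc le_rfl) measurableSet_Ioc
      hIg.integrableOn hIg.integrableOn, h1,
      ← setIntegral_union (Set.Iic_disjoint_Ioi le_rfl) measurableSet_Ioi
      hIg.integrableOn hIg.integrableOn, h2, setIntegral_univ]
  have hexp_eq : ((Real.exp (-(σ * η ^ 2 / 2)) : ℝ) : ℂ)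
      = (((Real.sqrt (2 * Real.pi * σ))⁻¹ : ℝ) : ℂ) * ∫ x : ℝ, g x := by
    rw [hg, aux_full σ η hσ, ← mul_assoc, ← Complex.ofReal_mul, inv_mul_cancel₀ hsq.ne',
      Complex.ofReal_one, one_mul]
  have key : (((Real.sqrt (2 * Real.pi * σ))⁻¹ : ℝ) : ℂ) *
      (∫ x in Set.Icc (-a) a, g x) - ((Real.exp (-(σ * η ^ 2 / 2)) : ℝ) : ℂ)
      = -((((Real.sqrt (2 * Real.pi * σ))⁻¹ : ℝ) : ℂ) *
        ((∫ x in Set.Iic (-a), g x) + ∫ x in Set.Ioi a, g x)) := by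
    rw [hIcc, hexp_eq, hsplit]
    ring
  -- Bound 2 : E ≤ 4 * X
  have hb2ineq : β^2/2 ≤ a^2/(2*σ) := by
    rw [ha2, div_le_div_iff₀ (by norm_num) (by positivity)]
    nlinarith [sq_nonneg β]
  have hEX : E ≤ 4 * (|η|⁻¹ * (Real.sqrt σ)⁻¹ * Real.exp (-(β^2/2))) := by
    rw [hE, key, norm_neg, norm_mul, Complex.norm_real, Real.norm_eq_abs,
      _root_.abs_of_nonneg (by positivity : (0:ℝ) ≤ (Real.sqrt (2 * Real.pi * σ))⁻¹)]
    have hT1 := aux_tail_neg σ η a hσ hη ha.le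
    have hT2 := aux_tail σ η a hσ hη ha.le
    have hTsum : ‖(∫ x in Set.Iic (-a), g x) + ∫ x in Set.Ioi a, g x‖
        ≤ 4 * Real.exp (-(a^2/(2*σ))) / |η| := by
      refine le_trans (norm_add_le _ _) ?_
      rw [hg]
      calc ‖∫ x in Set.Iic (-a), Complex.exp (-(Complex.I * x * η) - (x:ℂ)^2 / (2*σ))‖
            + ‖∫ x in Set.Ioi a, Complex.exp (-(Complex.I * x * η) - (x:ℂ)^2 / (2*σ))‖
          ≤ 2 * Real.exp (-(a^2/(2*σ))) / |η| + 2 * Real.exp (-(a^2/(2*σ))) / |η| :=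
            add_le_add hT1 hT2
        _ = 4 * Real.exp (-(a^2/(2*σ))) / |η| := by ring
    have hexple : Real.exp (-(a^2/(2*σ))) ≤ Real.exp (-(β^2/2)) :=
      Real.exp_le_exp.mpr (by linarith)
    have hsqle : (Real.sqrt (2 * Real.pi * σ))⁻¹ ≤ (Real.sqrt σ)⁻¹ := by
      apply inv_anti₀ (Real.sqrt_pos.mpr hσ)
      apply Real.sqrt_le_sqrt
      nlinarith [Real.pi_gt_three, hσ]
    calc (Real.sqrt (2 * Real.pi * σ))⁻¹ * ‖(∫ x in Set.Iic (-a), g x) + ∫ x in Set.Ioi a, g x‖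
        ≤ (Real.sqrt σ)⁻¹ * (4 * Real.exp (-(β^2/2)) / |η|) := by
          refine mul_le_mul hsqle (le_trans hTsum ?_) (norm_nonneg _) (by positivity)
          gcongr
      _ = 4 * (|η|⁻¹ * (Real.sqrt σ)⁻¹ * Real.exp (-(β^2/2))) := by
          field_simp
  -- interpolation
  set X : ℝ := |η|⁻¹ * (Real.sqrt σ)⁻¹ * Real.exp (-(β^2/2)) with hX
  have hXpos : 0 < X := by
    rw [hX]
    have : |η| > 0 := abs_pos.mpr hη
    positivity
  have hE0 : 0 ≤ E := by rw [hE]; exact norm_nonneg _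
  have h24 : (2:ℝ) ^ (2:ℝ) = 4 := by
    rw [show (2:ℝ) = ((2:ℕ):ℝ) from by norm_num]
    rw [Real.rpow_natCast]
    norm_num
  calc E = E ^ ((1-θ) + θ) := by rw [sub_add_cancel, Real.rpow_one]
    _ = E ^ (1-θ) * E ^ θ := Real.rpow_add' hE0 (by rw [sub_add_cancel]; exact one_ne_zero)
    _ ≤ 2 ^ (1-θ) * (4*X) ^ θ := by
        refine mul_le_mul (Real.rpow_le_rpow hE0 hE2 (by linarith))
          (Real.rpow_le_rpow hE0 hEX hθ0) (Real.rpow_nonneg hE0 θ)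
          (Real.rpow_nonneg (by norm_num) _)
    _ = 2 ^ (1-θ) * ((4:ℝ) ^ θ * X ^ θ) := by rw [Real.mul_rpow (by norm_num) hXpos.le]
    _ ≤ 4 * X ^ θ := by
        have h4θ : (4:ℝ) ^ θ = 2 ^ (2*θ) := by
          rw [← h24, ← Real.rpow_mul (by norm_num : (0:ℝ) ≤ 2)]
        rw [h4θ, ← mul_assoc, ← Real.rpow_add (by norm_num : (0:ℝ) < 2)]
        have hle : (2:ℝ) ^ (1 - θ + 2*θ) ≤ 4 := by
          rw [← h24]
          exact Real.rpow_le_rpow_of_exponent_le (by norm_num) (by linarith)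
        exact mul_le_mul_of_nonneg_right hle (Real.rpow_nonneg hXpos.le θ)
    _ = 4 * |η| ^ (-θ) * σ ^ (-θ / 2) * Real.exp (-β ^ 2 * θ / 2) := by
        rw [hX, Real.mul_rpow (by positivity) (Real.exp_pos _).le,
          Real.mul_rpow (by positivity) (by positivity)]
        rw [← Real.rpow_neg_one |η|, ← Real.rpow_mul (abs_nonneg η), neg_one_mul]
        rw [Real.sqrt_eq_rpow, ← Real.rpow_neg hσ.le, ← Real.rpow_mul hσ.le]
        rw [← Real.exp_mul]
        rw [show -(1/2) * θ = -θ/2 from by ring, show -(β^2/2) * θ = -β^2*θ/2 from by ring]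
        ring
end
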